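/- Let U be a unitary operator on a Hilbert space H with spectral measure E on the unit circle (angle parametrization on [-π,π]_per), and let {K_ε^𝕋} be an m-th order kernel. For any g ∈ H with ‖g‖=1 and any φ ∈ C^{n,α}([-π,π]_per) with n + α < m, |∫ φ(θ) dξ_g(θ) - ∫ φ(θ)[K_ε^𝕋 ∗ ξ_g](θ) dθ| ≤ C ‖φ‖_{C^{n,α}} ε^{n+α}, where ξ_g(S) = ⟨E(exp(iS))g, g⟩ and C depends only on the kernel constants, m, n, α. -/

import Mathlib

open MeasureTheory Real Finset intervalIntegral

noncomputable section
namespace WCR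
/-- `e^{-iu} - 1`. -/
def zz (u : ℝ) : ℂ := Complex.exp (-(u:ℂ) * Complex.I) - 1

lemma continuous_zz : Continuous zz := by
  unfold zz; fun_prop

lemma zz_norm_le_two (u : ℝ) : ‖zz u‖ ≤ 2 := by
  have h : ‖Complex.exp (-(u:ℂ) * Complex.I)‖ = 1 := by
    have : -(u:ℂ) * Complex.I = ((-u : ℝ) : ℂ) * Complex.I := by push_cast; ring
    rw [this, Complex.norm_exp_ofReal_mul_I]
  calc ‖zz u‖ ≤ ‖Complex.exp (-(u:ℂ) * Complex.I)‖ + ‖(1:ℂ)‖ := norm_sub_le _ _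
  _ ≤ 2 := by rw [h]; norm_num

lemma zz_norm_le (u : ℝ) : ‖zz u‖ ≤ 2 * |u| := by
  rcases le_or_gt |u| 1 with h | h
  · have habs : ‖(-(u:ℂ) * Complex.I)‖ = |u| := by
      simp
    have hx : ‖(-(u:ℂ) * Complex.I)‖ ≤ 1 := by rw [habs]; exact h
    have h2 := Complex.norm_exp_sub_one_le hx
    rw [habs] at h2
    simpa [zz] using h2
  · calc ‖zz u‖ ≤ 2 := zz_norm_le_two u
    _ ≤ 2 * |u| := by nlinarith

lemma one_add_zz (u : ℝ) : 1 + zz u = Complex.exp (-(u:ℂ) * Complex.I) := by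
  simp [zz]

/-- coefficients of `i·logTaylor (n+1)`. -/
def ww (n j : ℕ) : ℂ :=
  if j = 0 then 0 else if j ≤ n then Complex.I * (-1)^(j+1) / j else 0

lemma ww_norm_le_one (n j : ℕ) : ‖ww n j‖ ≤ 1 := by
  unfold ww
  rcases eq_or_ne j 0 with rfl | hj
  · simp
  · simp only [hj, if_false]
    split_ifs with h
    · have hj1 : (1:ℝ) ≤ (j:ℝ) := by exact_mod_cast Nat.one_le_iff_ne_zero.mpr hj
      rw [norm_div, norm_mul]
      simp only [Complex.norm_I, norm_pow, norm_neg, norm_one, one_pow, one_mul,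
        Complex.norm_natCast]
      rw [div_le_one (by linarith)]
      linarith
    · simp

/-- The truncated `i·log(1+z)` series evaluated at `zz u`. -/
def WW (n : ℕ) (u : ℝ) : ℂ := ∑ j ∈ range (n+1), ww n j * zz u ^ j

lemma WW_eq_logTaylor (n : ℕ) (u : ℝ) :
    WW n u = Complex.I * Complex.logTaylor (n+1) (zz u) := by
  unfold WW Complex.logTaylor
  rw [mul_sum]
  refine sum_congr rfl fun j hj => ?_
  rcases eq_or_ne j 0 with rfl | hj0
  · simp [ww]
  · have hjn : j ≤ n := by have := mem_range.mp hj; omega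
    simp only [ww, hj0, if_false, hjn, if_true]
    ring

lemma WW_norm_le (n : ℕ) (u : ℝ) : ‖WW n u‖ ≤ 2^(n+1) := by
  calc ‖WW n u‖ ≤ ∑ j ∈ range (n+1), ‖ww n j * zz u ^ j‖ := norm_sum_le _ _
  _ ≤ ∑ j ∈ range (n+1), 2^j := by
      refine sum_le_sum fun j _ => ?_
      rw [norm_mul, norm_pow]
      calc ‖ww n j‖ * ‖zz u‖^j ≤ 1 * 2^j := by
            apply mul_le_mul (ww_norm_le_one n j) (pow_le_pow_left₀ (norm_nonneg _)
              (zz_norm_le_two u) j) (by positivity) zero_le_one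
      _ = 2^j := one_mul _
  _ ≤ 2^(n+1) := by
      have hg : ∑ j ∈ range (n+1), (2:ℝ)^j = 2^(n+1) - 1 := by
        rw [geom_sum_eq (by norm_num : (2:ℝ) ≠ 1)]; norm_num
      rw [hg]; linarith

/-- Constant in the `WW` approximation. -/
def CW (n : ℕ) : ℝ := 4^(n+1) * (2^(n+1) + π + 2)

lemma CW_pos (n : ℕ) : 0 < CW n := by
  have := pi_pos
  unfold CW; positivity

lemma WW_approx (n : ℕ) {u : ℝ} (hu : |u| ≤ π) :
    ‖WW n u - u‖ ≤ CW n * |u|^(n+1) := by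
  have hπ := pi_pos
  rcases le_or_gt |u| (1/4) with h | h
  · -- small case
    have hz : ‖zz u‖ ≤ 1/2 := by
      calc ‖zz u‖ ≤ 2 * |u| := zz_norm_le u
      _ ≤ 1/2 := by linarith
    have hz1 : ‖zz u‖ < 1 := by linarith
    have him : (-(u:ℂ) * Complex.I).im = -u := by simp
    obtain ⟨hu1, hu2⟩ := abs_le.mp h
    have hπ3 := pi_gt_three
    have hlog : Complex.log (1 + zz u) = -(u:ℂ) * Complex.I := by
      rw [one_add_zz]
      refine Complex.log_exp ?_ ?_ <;> rw [him] <;> linarith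
    have hItay : Complex.I * Complex.log (1 + zz u) = (u:ℂ) := by
      rw [hlog, show Complex.I * (-(u:ℂ) * Complex.I) = -(Complex.I*Complex.I) * u by ring,
        Complex.I_mul_I]; ring
    have key := Complex.norm_log_sub_logTaylor_le n hz1
    have : WW n u - u = Complex.I * (Complex.logTaylor (n+1) (zz u) - Complex.log (1 + zz u)) := by
      rw [WW_eq_logTaylor, mul_sub, hItay]
    rw [this, norm_mul, Complex.norm_I, one_mul, norm_sub_rev]
    calc ‖Complex.log (1 + zz u) - Complex.logTaylor (n+1) (zz u)‖
        ≤ ‖zz u‖^(n+1) * (1 - ‖zz u‖)⁻¹ / (n+1) := key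
    _ ≤ (2*|u|)^(n+1) * 2 / 1 := by
        have e1 : ‖zz u‖^(n+1) ≤ (2*|u|)^(n+1) :=
          pow_le_pow_left₀ (norm_nonneg _) (zz_norm_le u) _
        have e2 : (1-‖zz u‖)⁻¹ ≤ 2 := by
          have h12 : (1:ℝ)/2 ≤ 1 - ‖zz u‖ := by linarith
          calc (1-‖zz u‖)⁻¹ ≤ ((1:ℝ)/2)⁻¹ := by
                apply inv_anti₀ (by norm_num) h12
          _ = 2 := by norm_num
        have hn1 : (1:ℝ) ≤ (n:ℝ)+1 := by
          have : (0:ℝ) ≤ (n:ℝ) := Nat.cast_nonneg n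
          linarith
        exact div_le_div₀ (by positivity)
          (mul_le_mul e1 e2 (by rw [inv_nonneg]; linarith) (by positivity)) one_pos hn1
    _ = 2^(n+1) * 2 * |u|^(n+1) := by rw [mul_pow]; ring
    _ ≤ CW n * |u|^(n+1) := by
        apply mul_le_mul_of_nonneg_right _ (by positivity)
        unfold CW
        have h4 : (2:ℝ)^(n+1) * 2 ≤ 4^(n+1) * 2^(n+1) := by
          have : (2:ℝ) ≤ 4^(n+1) := by
            calc (2:ℝ) ≤ 4 := by norm_num
            _ ≤ 4^(n+1) := le_self_pow₀ (by norm_num) (by omega)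
          nlinarith [pow_pos (show (0:ℝ) < 2 by norm_num) (n+1)]
        nlinarith [pow_pos (show (0:ℝ) < 4 by norm_num) (n+1),
          pow_pos (show (0:ℝ) < 2 by norm_num) (n+1)]
  · -- large case
    have h4 : (1/4 : ℝ)^(n+1) ≤ |u|^(n+1) := by
      apply pow_le_pow_left₀ (by norm_num) (le_of_lt h)
    calc ‖WW n u - u‖ ≤ ‖WW n u‖ + ‖(u:ℂ)‖ := norm_sub_le _ _
    _ ≤ 2^(n+1) + π := by
        have hnr : ‖(u:ℂ)‖ = |u| := by rw [Complex.norm_real, Real.norm_eq_abs]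
        rw [hnr]
        exact add_le_add (WW_norm_le n u) hu
    _ = (4:ℝ)^(n+1) * (2^(n+1) + π) * (1/4)^(n+1) := by
        rw [mul_comm ((4:ℝ)^(n+1)) _, mul_assoc]
        rw [← mul_pow]
        norm_num
    _ ≤ CW n * |u|^(n+1) := by
        unfold CW
        apply mul_le_mul _ h4 (by positivity) (by positivity)
        nlinarith [pow_pos (show (0:ℝ) < 4 by norm_num) (n+1)]

/-- Coefficients of the truncation of `WW^k` to degree `n`. -/
def pp (n : ℕ) : ℕ → ℕ → ℂ
  | 0, l => if l = 0 then 1 else 0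
  | k+1, l => ∑ x ∈ (range (n+1) ×ˢ range (n+1)).filter (fun x => x.1 + x.2 = l),
      pp n k x.1 * ww n x.2

lemma pp_norm_le (n : ℕ) : ∀ k l, ‖pp n k l‖ ≤ ((n:ℝ)+1)^k := by
  intro k
  induction k with
  | zero =>
    intro l
    rcases eq_or_ne l 0 with rfl | h
    · simp [pp]
    · simp [pp, h]
  | succ k ih =>
    intro l
    have hcard : ((range (n+1) ×ˢ range (n+1)).filter (fun x => x.1 + x.2 = l)).card
        ≤ n + 1 := by
      have hc2 : ((range (n+1) ×ˢ range (n+1)).filter (fun x => x.1 + x.2 = l)).card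
          ≤ (range (n+1)).card := by
        apply Finset.card_le_card_of_injOn (fun x => x.1)
        · intro x hx
          exact (Finset.mem_product.mp (Finset.mem_filter.mp hx).1).1
        · intro x hx y hy hxy
          simp only [Finset.coe_filter, Set.mem_setOf_eq] at hx hy
          have hx2 := hx.2
          have hy2 := hy.2
          have h1 : x.1 = y.1 := hxy
          have h2 : x.2 = y.2 := by omega
          exact Prod.ext h1 h2
      simpa using hc2
    calc ‖pp n (k+1) l‖
        ≤ ∑ x ∈ (range (n+1) ×ˢ range (n+1)).filter (fun x => x.1 + x.2 = l),
            ‖pp n k x.1 * ww n x.2‖ := by rw [show pp n (k+1) l = _ from rfl]; exact norm_sum_le _ _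
    _ ≤ ∑ _x ∈ (range (n+1) ×ˢ range (n+1)).filter (fun x => x.1 + x.2 = l),
            ((n:ℝ)+1)^k := by
        refine sum_le_sum fun x _ => ?_
        rw [norm_mul]
        calc ‖pp n k x.1‖ * ‖ww n x.2‖ ≤ ((n:ℝ)+1)^k * 1 :=
              mul_le_mul (ih x.1) (ww_norm_le_one n x.2) (norm_nonneg _) (by positivity)
        _ = ((n:ℝ)+1)^k := mul_one _
    _ = (((range (n+1) ×ˢ range (n+1)).filter (fun x => x.1 + x.2 = l)).card : ℝ)
          * ((n:ℝ)+1)^k := by rw [sum_const, nsmul_eq_mul]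
    _ ≤ ((n:ℝ)+1) * ((n:ℝ)+1)^k := by
        apply mul_le_mul_of_nonneg_right _ (by positivity)
        exact_mod_cast hcard
    _ = ((n:ℝ)+1)^(k+1) := by ring

lemma pp_zero_zero (n : ℕ) : pp n 0 0 = 1 := by simp [pp]

lemma pp_succ_zero (n k : ℕ) : pp n (k+1) 0 = 0 := by
  rw [show pp n (k+1) 0 = _ from rfl]
  apply Finset.sum_eq_zero
  intro x hx
  have hx2 := (Finset.mem_filter.mp hx).2
  have : x.2 = 0 := by omega
  rw [this]
  simp [ww]

/-- Truncation of `WW^k` to degree `n`, evaluated. -/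
def SS (n k : ℕ) (u : ℝ) : ℂ := ∑ l ∈ range (n+1), pp n k l * zz u ^ l

def DD (n : ℕ) : ℕ → ℝ
  | 0 => 0
  | k+1 => ((n:ℝ)+1)^(k+2) * (2+2*π)^(2*n+2) + 2^(n+1) * DD n k + π^n * CW n

lemma DD_nonneg (n k : ℕ) : 0 ≤ DD n k := by
  induction k with
  | zero => simp [DD]
  | succ k ih =>
    have h1 := pi_pos
    have h2 := CW_pos n
    rw [show DD n (k+1) = ((n:ℝ)+1)^(k+2) * (2+2*π)^(2*n+2)
      + 2^(n+1) * DD n k + π^n * CW n from rfl]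
    have t1 : (0:ℝ) ≤ ((n:ℝ)+1)^(k+2) * (2+2*π)^(2*n+2) := by positivity
    have t2 : (0:ℝ) ≤ (2:ℝ)^(n+1) * DD n k := mul_nonneg (by positivity) ih
    have t3 : (0:ℝ) ≤ π^n * CW n := mul_nonneg (by positivity) (le_of_lt h2)
    linarith

lemma SS_zero (n : ℕ) (u : ℝ) : SS n 0 u = 1 := by
  unfold SS
  rw [Finset.sum_eq_single 0]
  · simp [pp_zero_zero]
  · intro l _ hl; simp [pp, hl]
  · intro h; exact absurd (Finset.mem_range.mpr (Nat.succ_pos n)) h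

lemma SS_approx (n : ℕ) : ∀ k, k ≤ n → ∀ u : ℝ, |u| ≤ π →
    ‖SS n k u - (u:ℂ)^k‖ ≤ DD n k * |u|^(n+1) := by
  intro k
  induction k with
  | zero =>
    intro _ u _
    rw [SS_zero]
    simp [DD]
  | succ k ih =>
    intro hk1 u hu
    have hk : k ≤ n := Nat.le_of_succ_le hk1
    have hπ1 : (1:ℝ) ≤ π := by linarith [pi_gt_three]
    have hu0 : (0:ℝ) ≤ |u| := abs_nonneg u
    set P := range (n+1) ×ˢ range (n+1) with hP
    set F : ℕ × ℕ → ℂ := fun x => pp n k x.1 * ww n x.2 * zz u ^ (x.1 + x.2) with hF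
    -- product identity
    have hprod : SS n k u * WW n u = ∑ x ∈ P, F x := by
      unfold SS WW
      rw [Finset.sum_mul_sum, ← Finset.sum_product']
      refine Finset.sum_congr rfl fun x _ => ?_
      simp only [hF]
      rw [pow_add]; ring
    -- fiberwise identity
    have hsplit : ∑ x ∈ P, F x
        = ∑ x ∈ P.filter (fun x => x.1 + x.2 ≤ n), F x
          + ∑ x ∈ P.filter (fun x => ¬ (x.1 + x.2 ≤ n)), F x :=
      (Finset.sum_filter_add_sum_filter_not P _ F).symm
    have hmaps : ∀ x ∈ P.filter (fun x => x.1 + x.2 ≤ n), x.1 + x.2 ∈ range (n+1) := by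
      intro x hx
      exact Finset.mem_range.mpr (Nat.lt_succ_of_le (Finset.mem_filter.mp hx).2)
    have hfib := Finset.sum_fiberwise_of_maps_to hmaps F
    have hSS : SS n (k+1) u = ∑ x ∈ P.filter (fun x => x.1 + x.2 ≤ n), F x := by
      rw [← hfib]
      unfold SS
      refine Finset.sum_congr rfl fun l hl => ?_
      have hln : l ≤ n := Nat.lt_succ_iff.mp (Finset.mem_range.mp hl)
      have hfilter : (P.filter (fun x => x.1 + x.2 ≤ n)).filter (fun x => x.1 + x.2 = l)
          = P.filter (fun x => x.1 + x.2 = l) := by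
        rw [Finset.filter_filter]
        apply Finset.filter_congr
        intro x _
        constructor
        · rintro ⟨_, h⟩; exact h
        · intro h; exact ⟨by omega, h⟩
      rw [hfilter, show pp n (k+1) l = ∑ x ∈ P.filter (fun x => x.1 + x.2 = l),
        pp n k x.1 * ww n x.2 from rfl, Finset.sum_mul]
      refine Finset.sum_congr rfl fun x hx => ?_
      have := (Finset.mem_filter.mp hx).2
      simp only [hF, this]
    -- tail bound
    have htail : ‖∑ x ∈ P.filter (fun x => ¬ (x.1 + x.2 ≤ n)), F x‖
        ≤ ((n:ℝ)+1)^(k+2) * (2+2*π)^(2*n+2) * |u|^(n+1) := by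
      calc ‖∑ x ∈ P.filter (fun x => ¬ (x.1 + x.2 ≤ n)), F x‖
          ≤ ∑ x ∈ P.filter (fun x => ¬ (x.1 + x.2 ≤ n)), ‖F x‖ := norm_sum_le _ _
      _ ≤ ∑ _x ∈ P.filter (fun x => ¬ (x.1 + x.2 ≤ n)),
            ((n:ℝ)+1)^k * ((2+2*π)^(2*n+2) * |u|^(n+1)) := by
          refine sum_le_sum fun x hx => ?_
          have hmem := Finset.mem_filter.mp hx
          have hx1 : x.1 ≤ n := Nat.lt_succ_iff.mp (Finset.mem_range.mp
            (Finset.mem_product.mp hmem.1).1)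
          have hx2 : x.2 ≤ n := Nat.lt_succ_iff.mp (Finset.mem_range.mp
            (Finset.mem_product.mp hmem.1).2)
          have hs1 : n + 1 ≤ x.1 + x.2 := by omega
          have hs2 : x.1 + x.2 ≤ 2*n := by omega
          have hzp : ‖zz u ^ (x.1 + x.2)‖ ≤ (2+2*π)^(2*n+2) * |u|^(n+1) := by
            rw [norm_pow]
            calc ‖zz u‖ ^ (x.1+x.2) ≤ (2*|u|) ^ (x.1+x.2) :=
                  pow_le_pow_left₀ (norm_nonneg _) (zz_norm_le u) _
            _ = 2^(x.1+x.2) * |u|^(x.1+x.2) := mul_pow _ _ _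
            _ = 2^(x.1+x.2) * (|u|^(n+1) * |u|^(x.1+x.2-(n+1))) := by
                congr 1
                rw [← pow_add, Nat.add_sub_cancel' hs1]
            _ ≤ 2^(2*n+2) * (|u|^(n+1) * π^(2*n+2)) := by
                apply mul_le_mul
                · apply pow_le_pow_right₀ (by norm_num); omega
                · apply mul_le_mul_of_nonneg_left _ (by positivity)
                  calc |u|^(x.1+x.2-(n+1)) ≤ π^(x.1+x.2-(n+1)) :=
                        pow_le_pow_left₀ hu0 hu _
                  _ ≤ π^(2*n+2) := pow_le_pow_right₀ hπ1 (by omega)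
                · positivity
                · positivity
            _ ≤ (2+2*π)^(2*n+2) * |u|^(n+1) := by
                rw [show (2:ℝ)^(2*n+2) * (|u|^(n+1) * π^(2*n+2))
                  = (2*π)^(2*n+2) * |u|^(n+1) by rw [mul_pow]; ring]
                apply mul_le_mul_of_nonneg_right _ (by positivity)
                apply pow_le_pow_left₀ (by positivity)
                linarith [pi_pos]
          calc ‖F x‖ = ‖pp n k x.1‖ * ‖ww n x.2‖ * ‖zz u ^ (x.1+x.2)‖ := by
                simp [hF, norm_mul]
          _ ≤ ((n:ℝ)+1)^k * 1 * ((2+2*π)^(2*n+2) * |u|^(n+1)) := by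
              apply mul_le_mul
              · exact mul_le_mul (pp_norm_le n k x.1) (ww_norm_le_one n x.2)
                  (norm_nonneg _) (by positivity)
              · exact hzp
              · exact norm_nonneg _
              · positivity
          _ = ((n:ℝ)+1)^k * ((2+2*π)^(2*n+2) * |u|^(n+1)) := by ring
      _ ≤ ((n+1:ℕ)^2 : ℝ) * (((n:ℝ)+1)^k * ((2+2*π)^(2*n+2) * |u|^(n+1))) := by
          rw [sum_const, nsmul_eq_mul]
          apply mul_le_mul_of_nonneg_right _ (by positivity)
          have hc : (P.filter (fun x => ¬ (x.1 + x.2 ≤ n))).card ≤ (n+1)^2 := by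
            calc (P.filter (fun x => ¬ (x.1 + x.2 ≤ n))).card ≤ P.card :=
                  Finset.card_filter_le _ _
            _ = (n+1)^2 := by rw [hP, Finset.card_product, Finset.card_range]; ring
          exact_mod_cast hc
      _ = ((n:ℝ)+1)^(k+2) * (2+2*π)^(2*n+2) * |u|^(n+1) := by
          push_cast
          ring
    -- assemble
    have hW := WW_norm_le n u
    have hWa := WW_approx n hu
    have hIH := ih hk u hu
    have hdecomp : SS n (k+1) u - (u:ℂ)^(k+1)
        = -(∑ x ∈ P.filter (fun x => ¬ (x.1 + x.2 ≤ n)), F x)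
          + (SS n k u - (u:ℂ)^k) * WW n u + (u:ℂ)^k * (WW n u - u) := by
      have h1 : SS n (k+1) u = SS n k u * WW n u
          - ∑ x ∈ P.filter (fun x => ¬ (x.1 + x.2 ≤ n)), F x := by
        rw [hSS, hprod, hsplit]; ring
      rw [h1]; ring
    rw [hdecomp]
    have hnu : ‖(u:ℂ)^k‖ = |u|^k := by
      rw [norm_pow, Complex.norm_real, Real.norm_eq_abs]
    calc ‖_ + (SS n k u - (u:ℂ)^k) * WW n u + (u:ℂ)^k * (WW n u - u)‖
        ≤ ‖-(∑ x ∈ P.filter (fun x => ¬ (x.1 + x.2 ≤ n)), F x)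
            + (SS n k u - (u:ℂ)^k) * WW n u‖ + ‖(u:ℂ)^k * (WW n u - u)‖ := norm_add_le _ _
    _ ≤ (‖∑ x ∈ P.filter (fun x => ¬ (x.1 + x.2 ≤ n)), F x‖
          + ‖SS n k u - (u:ℂ)^k‖ * ‖WW n u‖) + ‖(u:ℂ)^k‖ * ‖WW n u - u‖ := by
        apply add_le_add
        · calc ‖_ + _‖ ≤ ‖-(∑ x ∈ P.filter (fun x => ¬ (x.1 + x.2 ≤ n)), F x)‖
              + ‖(SS n k u - (u:ℂ)^k) * WW n u‖ := norm_add_le _ _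
          _ = _ := by rw [norm_neg, norm_mul]
        · rw [norm_mul]
    _ ≤ (((n:ℝ)+1)^(k+2) * (2+2*π)^(2*n+2) * |u|^(n+1)
          + (DD n k * |u|^(n+1)) * 2^(n+1)) + π^n * (CW n * |u|^(n+1)) := by
        apply add_le_add
        apply add_le_add htail
        · apply mul_le_mul hIH hW (norm_nonneg _)
            (mul_nonneg (DD_nonneg n k) (by positivity))
        · apply mul_le_mul _ hWa (norm_nonneg _) (by positivity)
          rw [hnu]
          calc |u|^k ≤ π^k := pow_le_pow_left₀ hu0 hu _
          _ ≤ π^n := pow_le_pow_right₀ hπ1 hk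
    _ = DD n (k+1) * |u|^(n+1) := by
        rw [show DD n (k+1) = ((n:ℝ)+1)^(k+2) * (2+2*π)^(2*n+2)
          + 2^(n+1) * DD n k + π^n * CW n from rfl]
        ring

/-- Taylor's theorem with Hölder remainder. -/
lemma taylor_holder (M αe : ℝ) (hα0 : 0 ≤ αe) :
    ∀ (n : ℕ) (f : ℝ → ℂ), ContDiff ℝ n f →
      (∀ x y : ℝ, ‖iteratedDeriv n f x - iteratedDeriv n f y‖ ≤ M * |x - y| ^ αe) →
      ∀ a b : ℝ,
        ‖f b - ∑ k ∈ range (n+1), ((b-a)^k / (k.factorial : ℝ)) • iteratedDeriv k f a‖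
          ≤ M * |b - a| ^ ((n:ℝ) + αe) := by
  intro n
  induction n with
  | zero =>
    intro f _ hH a b
    have : ∑ k ∈ range 1, ((b-a)^k / (k.factorial : ℝ)) • iteratedDeriv k f a = f a := by
      simp [iteratedDeriv_zero]
    rw [this]
    simpa [iteratedDeriv_zero] using hH b a
  | succ n ih =>
    intro f hf hH a b
    have hdiff : Differentiable ℝ f := by
      apply hf.differentiable
      simp
    have hf' : ContDiff ℝ n (deriv f) := by
      have h := contDiff_succ_iff_deriv.mp
        (show ContDiff ℝ ((n:WithTop ℕ∞) + 1) f by exact_mod_cast hf)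
      exact h.2.2
    have hH' : ∀ x y : ℝ, ‖iteratedDeriv n (deriv f) x - iteratedDeriv n (deriv f) y‖
        ≤ M * |x - y| ^ αe := by
      intro x y
      rw [← iteratedDeriv_succ']
      exact hH x y
    have hIH := ih (deriv f) hf' hH' a
    set F : ℝ → ℂ := fun t =>
      f t - ∑ k ∈ range (n+2), ((t-a)^k / (k.factorial : ℝ)) • iteratedDeriv k f a with hFdef
    set F' : ℝ → ℂ := fun t =>
      deriv f t - ∑ k ∈ range (n+1), ((t-a)^k / (k.factorial : ℝ)) • iteratedDeriv (k+1) f a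
      with hF'def
    have hFa : F a = 0 := by
      simp only [hFdef]
      rw [Finset.sum_eq_single 0]
      · simp [iteratedDeriv_zero]
      · intro k _ hk
        rcases Nat.exists_eq_succ_of_ne_zero hk with ⟨j, rfl⟩
        simp [sub_self, zero_pow]
      · intro h; exact absurd (Finset.mem_range.mpr (Nat.succ_pos _)) h
    have hFderiv : ∀ t : ℝ, HasDerivAt F (F' t) t := by
      intro t
      have h1 : HasDerivAt f (deriv f t) t := (hdiff t).hasDerivAt
      have h2 : HasDerivAt (fun t => ∑ k ∈ range (n+2),
          ((t-a)^k / (k.factorial : ℝ)) • iteratedDeriv k f a)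
          (∑ k ∈ range (n+2),
            ((k * (t-a)^(k-1)) / (k.factorial : ℝ)) • iteratedDeriv k f a) t := by
        apply HasDerivAt.fun_sum
        intro k _
        have hp : HasDerivAt (fun t : ℝ => (t-a)^k) (k * (t-a)^(k-1) * 1) t :=
          ((hasDerivAt_id t).sub_const a).pow k
        have := (hp.div_const (k.factorial : ℝ)).smul_const (iteratedDeriv k f a)
        simpa using this
      have h3 : ∑ k ∈ range (n+2), ((k * (t-a)^(k-1)) / (k.factorial : ℝ))
            • iteratedDeriv k f a
          = ∑ k ∈ range (n+1), ((t-a)^k / (k.factorial : ℝ)) • iteratedDeriv (k+1) f a := by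
        rw [Finset.sum_range_succ']
        have hz : ((0:ℕ) * (t-a)^(0-1) / ((0:ℕ).factorial : ℝ)) • iteratedDeriv 0 f a = 0 := by
          simp
        rw [hz, add_zero]
        refine Finset.sum_congr rfl fun k _ => ?_
        congr 1
        rw [Nat.factorial_succ]
        push_cast
        have hkf : ((k.factorial : ℝ)) ≠ 0 := by positivity
        field_simp
      have := h1.sub (h2.congr_deriv h3)
      exact this
    have hM : 0 ≤ M := by
      have h01 := hH 0 1
      rw [show |(0:ℝ) - 1| = 1 by norm_num, Real.one_rpow, mul_one] at h01
      exact le_trans (norm_nonneg _) h01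
    have hF'cont : Continuous F' := by
      have hdc : Continuous (deriv f) := hf'.continuous
      apply hdc.sub
      apply continuous_finset_sum
      intro k _
      exact ((((continuous_id.sub continuous_const).pow k).div_const _).smul continuous_const)
    have hFTC : ∫ t in a..b, F' t = F b - F a :=
      intervalIntegral.integral_eq_sub_of_hasDerivAt (fun t _ => hFderiv t)
        (hF'cont.intervalIntegrable a b)
    have hbound : ∀ t ∈ Set.uIoc a b, ‖F' t‖ ≤ M * |b - a| ^ ((n:ℝ) + αe) := by
      intro t ht
      have habs : |t - a| ≤ |b - a| :=
        Set.abs_sub_left_of_mem_uIcc (Set.uIoc_subset_uIcc ht)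
      have heq : F' t = deriv f t - ∑ k ∈ range (n+1),
          ((t-a)^k / (k.factorial : ℝ)) • iteratedDeriv k (deriv f) a := by
        simp only [hF'def]
        congr 1
        exact Finset.sum_congr rfl fun k _ => by rw [← iteratedDeriv_succ']
      rw [heq]
      refine le_trans (hIH t) ?_
      apply mul_le_mul_of_nonneg_left _ hM
      apply Real.rpow_le_rpow (abs_nonneg _) habs
      positivity
    have hFb : ‖F b‖ ≤ M * |b - a| ^ ((n:ℝ) + αe) * |b - a| := by
      rw [show F b = F b - F a by rw [hFa, sub_zero], ← hFTC]
      exact intervalIntegral.norm_integral_le_of_norm_le_const hbound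
    rw [show f b - ∑ k ∈ range (n+1+1),
      ((b-a)^k / (k.factorial : ℝ)) • iteratedDeriv k f a = F b from rfl]
    rcases eq_or_ne b a with rfl | hne
    · rw [hFa]
      have : M * |b - b| ^ (((n:ℕ)+1:ℝ) + αe) = 0 := by
        rw [sub_self, abs_zero, Real.zero_rpow (by positivity)]
        ring
      rw [norm_zero]
      push_cast
      push_cast at this
      linarith [this.ge, this.le]
    · have h0 : (0:ℝ) < |b - a| := abs_pos.mpr (sub_ne_zero.mpr hne)
      refine le_trans hFb ?_
      rw [show M * |b - a| ^ ((n:ℝ) + αe) * |b - a|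
          = M * (|b - a| ^ ((n:ℝ) + αe) * |b - a| ^ (1:ℝ)) by
        rw [Real.rpow_one]; ring]
      rw [← Real.rpow_add h0]
      apply le_of_eq
      congr 1
      push_cast
      ring

/-- Constant for the pointwise trig-polynomial approximation. -/
def CP (n : ℕ) : ℝ := ((n:ℝ)+1)^(n+1) + 1 + π * ∑ k ∈ range (n+1), DD n k

lemma CP_pos (n : ℕ) : 0 < CP n := by
  have h1 : (0:ℝ) ≤ π * ∑ k ∈ range (n+1), DD n k :=
    mul_nonneg (le_of_lt pi_pos) (Finset.sum_nonneg fun k _ => DD_nonneg n k)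
  have h2 : (0:ℝ) < ((n:ℝ)+1)^(n+1) := by positivity
  unfold CP; linarith

lemma pointwise_approx (n : ℕ) (αe : ℝ) (hα0 : 0 ≤ αe) (hα1 : αe ≤ 1)
    (φ : ℝ → ℂ) (Cφ : ℝ) (hφ : ContDiff ℝ n φ)
    (hbd : ∀ j : ℕ, j ≤ n → ∀ θ : ℝ, ‖iteratedDeriv j φ θ‖ ≤ Cφ)
    (hHol : ∀ x y : ℝ, ‖iteratedDeriv n φ x - iteratedDeriv n φ y‖ ≤ Cφ * |x - y| ^ αe)
    (x : ℝ) :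
    ∃ b : ℕ → ℂ, b 0 = φ x ∧ (∀ l, ‖b l‖ ≤ CP n * Cφ) ∧
      ∀ u : ℝ, |u| ≤ π →
        ‖φ (x+u) - ∑ l ∈ range (n+1), b l * zz u ^ l‖ ≤ CP n * Cφ * |u| ^ ((n:ℝ) + αe) := by
  have hπ1 : (1:ℝ) ≤ π := by linarith [pi_gt_three]
  have hCφ : 0 ≤ Cφ := le_trans (norm_nonneg _) (hbd 0 (Nat.zero_le n) 0)
  set cc : ℕ → ℂ := fun k => iteratedDeriv k φ x / (k.factorial : ℂ) with hcc
  have hccle : ∀ k, k ≤ n → ‖cc k‖ ≤ Cφ := by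
    intro k hk
    rw [hcc]
    simp only [norm_div, Complex.norm_natCast]
    have h1n : 1 ≤ k.factorial := Nat.one_le_iff_ne_zero.mpr (Nat.factorial_ne_zero k)
    have h1 : (1:ℝ) ≤ (k.factorial : ℝ) := by exact_mod_cast h1n
    calc ‖iteratedDeriv k φ x‖ / (k.factorial : ℝ) ≤ Cφ / 1 :=
          div_le_div₀ hCφ (hbd k hk x) one_pos h1
    _ = Cφ := div_one Cφ
  refine ⟨fun l => ∑ k ∈ range (n+1), cc k * pp n k l, ?_, ?_, ?_⟩
  · show ∑ k ∈ range (n+1), cc k * pp n k 0 = φ x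
    rw [Finset.sum_range_succ']
    have h1 : ∀ k ∈ range n, cc (k+1) * pp n (k+1) 0 = 0 := by
      intro k _; rw [pp_succ_zero]; ring
    rw [Finset.sum_congr rfl h1, Finset.sum_const_zero, zero_add, pp_zero_zero, mul_one, hcc]
    simp [iteratedDeriv_zero]
  · intro l
    calc ‖∑ k ∈ range (n+1), cc k * pp n k l‖
        ≤ ∑ k ∈ range (n+1), ‖cc k * pp n k l‖ := norm_sum_le _ _
    _ ≤ ∑ k ∈ range (n+1), Cφ * ((n:ℝ)+1)^n := by
        refine sum_le_sum fun k hk => ?_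
        rw [norm_mul]
        have hkn : k ≤ n := Nat.lt_succ_iff.mp (Finset.mem_range.mp hk)
        apply mul_le_mul (hccle k hkn) _ (norm_nonneg _) hCφ
        calc ‖pp n k l‖ ≤ ((n:ℝ)+1)^k := pp_norm_le n k l
        _ ≤ ((n:ℝ)+1)^n := pow_le_pow_right₀ (by linarith [Nat.cast_nonneg (α := ℝ) n]) hkn
    _ = ((n:ℝ)+1) * (Cφ * ((n:ℝ)+1)^n) := by
        rw [sum_const, card_range, nsmul_eq_mul]; push_cast; ring
    _ ≤ CP n * Cφ := by
        have h1 : (0:ℝ) ≤ π * ∑ k ∈ range (n+1), DD n k :=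
          mul_nonneg (le_of_lt pi_pos) (Finset.sum_nonneg fun k _ => DD_nonneg n k)
        have h2 : ((n:ℝ)+1) * (Cφ * ((n:ℝ)+1)^n) = ((n:ℝ)+1)^(n+1) * Cφ := by ring
        rw [h2]
        unfold CP
        nlinarith [pow_pos (show (0:ℝ) < (n:ℝ)+1 by positivity) (n+1)]
  · intro u hu
    have hue : ∑ l ∈ range (n+1), (∑ k ∈ range (n+1), cc k * pp n k l) * zz u ^ l
        = ∑ k ∈ range (n+1), cc k * SS n k u := by
      calc ∑ l ∈ range (n+1), (∑ k ∈ range (n+1), cc k * pp n k l) * zz u ^ l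
          = ∑ l ∈ range (n+1), ∑ k ∈ range (n+1), cc k * pp n k l * zz u ^ l := by
            refine Finset.sum_congr rfl fun l _ => ?_
            rw [Finset.sum_mul]
      _ = ∑ k ∈ range (n+1), ∑ l ∈ range (n+1), cc k * pp n k l * zz u ^ l :=
            Finset.sum_comm
      _ = ∑ k ∈ range (n+1), cc k * SS n k u := by
            refine Finset.sum_congr rfl fun k _ => ?_
            unfold SS
            rw [Finset.mul_sum]
            exact Finset.sum_congr rfl fun l _ => by ring
    have htay := taylor_holder Cφ αe hα0 n φ hφ hHol x (x+u)
    have hxux : x + u - x = u := by ring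
    rw [hxux] at htay
    have hterm : ∀ k ∈ range (n+1), ((u:ℝ)^k / (k.factorial : ℝ)) • iteratedDeriv k φ x
        = cc k * (u:ℂ)^k := by
      intro k _
      rw [hcc, Complex.real_smul]
      push_cast
      ring
    rw [Finset.sum_congr rfl hterm] at htay
    have hdec : φ (x+u) - ∑ l ∈ range (n+1), (∑ k ∈ range (n+1), cc k * pp n k l) * zz u ^ l
        = (φ (x+u) - ∑ k ∈ range (n+1), cc k * (u:ℂ)^k)
          + ∑ k ∈ range (n+1), cc k * ((u:ℂ)^k - SS n k u) := by
      rw [hue]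
      have : ∑ k ∈ range (n+1), cc k * ((u:ℂ)^k - SS n k u)
          = ∑ k ∈ range (n+1), cc k * (u:ℂ)^k - ∑ k ∈ range (n+1), cc k * SS n k u := by
        rw [← Finset.sum_sub_distrib]
        exact Finset.sum_congr rfl fun k _ => by ring
      rw [this]
      ring
    rw [hdec]
    have hDDsum : (0:ℝ) ≤ ∑ k ∈ range (n+1), DD n k :=
      Finset.sum_nonneg fun k _ => DD_nonneg n k
    have hrpnn : (0:ℝ) ≤ |u| ^ ((n:ℝ) + αe) := Real.rpow_nonneg (abs_nonneg u) _
    have hpow : |u|^(n+1) ≤ π * |u| ^ ((n:ℝ) + αe) := by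
      rcases eq_or_ne u 0 with rfl | hu0
      · rw [abs_zero, zero_pow (Nat.succ_ne_zero n)]
        exact mul_nonneg (le_of_lt pi_pos) (Real.rpow_nonneg le_rfl _)
      · have h0 : 0 < |u| := abs_pos.mpr hu0
        have he1 : |u|^(n+1) = |u| ^ (((n+1:ℕ):ℝ)) := (Real.rpow_natCast _ _).symm
        rw [he1, show ((n+1:ℕ):ℝ) = ((n:ℝ) + αe) + (1-αe) by push_cast; ring,
          Real.rpow_add h0, mul_comm π _]
        apply mul_le_mul_of_nonneg_left _ hrpnn
        calc |u| ^ (1-αe) ≤ π ^ (1-αe) :=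
              Real.rpow_le_rpow (abs_nonneg u) hu (by linarith)
        _ ≤ π ^ (1:ℝ) := Real.rpow_le_rpow_of_exponent_le hπ1 (by linarith)
        _ = π := Real.rpow_one π
    calc ‖(φ (x+u) - ∑ k ∈ range (n+1), cc k * (u:ℂ)^k)
          + ∑ k ∈ range (n+1), cc k * ((u:ℂ)^k - SS n k u)‖
        ≤ ‖φ (x+u) - ∑ k ∈ range (n+1), cc k * (u:ℂ)^k‖
          + ‖∑ k ∈ range (n+1), cc k * ((u:ℂ)^k - SS n k u)‖ := norm_add_le _ _
    _ ≤ Cφ * |u| ^ ((n:ℝ) + αe)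
          + (∑ k ∈ range (n+1), DD n k) * (Cφ * |u|^(n+1)) := by
        apply add_le_add htay
        calc ‖∑ k ∈ range (n+1), cc k * ((u:ℂ)^k - SS n k u)‖
            ≤ ∑ k ∈ range (n+1), ‖cc k * ((u:ℂ)^k - SS n k u)‖ := norm_sum_le _ _
        _ ≤ ∑ k ∈ range (n+1), DD n k * (Cφ * |u|^(n+1)) := by
            refine sum_le_sum fun k hk => ?_
            have hkn : k ≤ n := Nat.lt_succ_iff.mp (Finset.mem_range.mp hk)
            rw [norm_mul, norm_sub_rev]
            calc ‖cc k‖ * ‖SS n k u - (u:ℂ)^k‖ ≤ Cφ * (DD n k * |u|^(n+1)) :=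
                  mul_le_mul (hccle k hkn) (SS_approx n k hkn u hu) (norm_nonneg _) hCφ
            _ = DD n k * (Cφ * |u|^(n+1)) := by ring
        _ = (∑ k ∈ range (n+1), DD n k) * (Cφ * |u|^(n+1)) := by
            rw [← Finset.sum_mul]
    _ ≤ Cφ * |u| ^ ((n:ℝ) + αe)
          + (∑ k ∈ range (n+1), DD n k) * (Cφ * (π * |u| ^ ((n:ℝ) + αe))) := by
        apply add_le_add le_rfl
        apply mul_le_mul_of_nonneg_left _ hDDsum
        exact mul_le_mul_of_nonneg_left hpow hCφ
    _ ≤ CP n * Cφ * |u| ^ ((n:ℝ) + αe) := by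
        unfold CP
        have h2 : (0:ℝ) < ((n:ℝ)+1)^(n+1) := by positivity
        nlinarith [mul_nonneg (mul_nonneg hCφ hrpnn) hDDsum,
          mul_nonneg hCφ hrpnn]

/-- The approximate reproducing property of the kernel on the monomials `zz^l`. -/
lemma moment (m : ℕ) (B : ℝ) (K : ℝ → ℂ) (hc : Continuous K)
    (hnorm : (∫ θ in (-π)..π, K θ) = 1)
    (hflat : ∀ j : ℕ, 1 ≤ j → j ≤ m - 1 →
      ‖(∫ θ in (-π)..π, K (-θ) * Complex.exp (Complex.I * (j:ℂ) * (θ:ℂ))) - 1‖ ≤ B)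
    (l : ℕ) (hl1 : 1 ≤ l) (hlm : l ≤ m - 1) :
    ‖∫ u in (-π)..π, zz u ^ l * K u‖ ≤ 2^l * B := by
  have hB : 0 ≤ B := le_trans (norm_nonneg _) (hflat 1 le_rfl (le_trans hl1 hlm))
  -- Fourier coefficients
  set G : ℕ → ℂ := fun j => ∫ u in (-π)..π, Complex.exp (-(j:ℂ) * u * Complex.I) * K u with hG
  have hG0 : G 0 = 1 := by
    rw [hG]
    simp only [Nat.cast_zero, neg_zero, zero_mul, Complex.exp_zero, one_mul]
    exact hnorm
  have hGflat : ∀ j : ℕ, 1 ≤ j → j ≤ m - 1 → ‖G j - 1‖ ≤ B := by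
    intro j hj1 hjm
    have hrefl : G j = ∫ θ in (-π)..π, K (-θ) * Complex.exp (Complex.I * (j:ℂ) * (θ:ℂ)) := by
      rw [hG]
      have h1 : ∀ u : ℝ, Complex.exp (-(j:ℂ) * u * Complex.I) * K u
          = K (-(-u)) * Complex.exp (Complex.I * (j:ℂ) * ((-u : ℝ) : ℂ)) := by
        intro u
        rw [neg_neg]
        push_cast
        rw [show Complex.I * (j:ℂ) * (-(u:ℂ)) = -(j:ℂ) * u * Complex.I by ring]
        ring
      calc (∫ u in (-π)..π, Complex.exp (-(j:ℂ) * u * Complex.I) * K u)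
          = ∫ u in (-π)..π, K (-(-u)) * Complex.exp (Complex.I * (j:ℂ) * ((-u:ℝ):ℂ)) := by
            apply intervalIntegral.integral_congr
            intro u _
            exact h1 u
      _ = ∫ θ in (-(π:ℝ))..(-(-π:ℝ)), K (-θ) * Complex.exp (Complex.I * (j:ℂ) * (θ:ℂ)) :=
            intervalIntegral.integral_comp_neg fun θ =>
              K (-θ) * Complex.exp (Complex.I * (j:ℂ) * (θ:ℂ))
      _ = ∫ θ in (-π)..π, K (-θ) * Complex.exp (Complex.I * (j:ℂ) * (θ:ℂ)) := by
            norm_num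
    rw [hrefl]
    exact hflat j hj1 hjm
  -- binomial expansion
  have hsplit : (∫ u in (-π)..π, zz u ^ l * K u)
      = ∑ i ∈ range (l+1), ((l.choose i : ℂ) * (-1)^(l-i)) * G i := by
    have hexp : ∀ u : ℝ, zz u ^ l * K u
        = ∑ i ∈ range (l+1), ((l.choose i : ℂ) * (-1)^(l-i))
            * (Complex.exp (-(i:ℂ) * u * Complex.I) * K u) := by
      intro u
      have hz : zz u ^ l = ∑ i ∈ range (l+1),
          Complex.exp (-(u:ℂ) * Complex.I) ^ i * (-1)^(l-i) * (l.choose i : ℂ) := by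
        rw [show zz u = Complex.exp (-(u:ℂ) * Complex.I) + (-1) by unfold zz; ring]
        exact add_pow _ _ l
      rw [hz, Finset.sum_mul]
      refine Finset.sum_congr rfl fun i _ => ?_
      rw [← Complex.exp_nat_mul, show (i:ℂ) * (-(u:ℂ) * Complex.I) = -(i:ℂ) * u * Complex.I
        by ring]
      ring
    rw [intervalIntegral.integral_congr (g := fun u => ∑ i ∈ range (l+1),
      ((l.choose i : ℂ) * (-1)^(l-i)) * (Complex.exp (-(i:ℂ) * u * Complex.I) * K u))
      (fun u _ => hexp u)]
    rw [intervalIntegral.integral_finset_sum]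
    · refine Finset.sum_congr rfl fun i _ => ?_
      rw [intervalIntegral.integral_const_mul]
    · intro i _
      apply Continuous.intervalIntegrable
      fun_prop
  have hvanish : ∑ i ∈ range (l+1), ((l.choose i : ℂ) * (-1)^(l-i)) = 0 := by
    have := add_pow (1:ℂ) (-1) l
    simp only [one_pow, one_mul] at this
    rw [show (1:ℂ) + (-1) = 0 by ring, zero_pow (by omega : l ≠ 0)] at this
    rw [show ∑ i ∈ range (l+1), ((l.choose i : ℂ) * (-1)^(l-i))
      = ∑ i ∈ range (l+1), (-1:ℂ)^(l-i) * (l.choose i : ℂ) from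
      Finset.sum_congr rfl fun i _ => by ring]
    exact this.symm
  have hre : (∫ u in (-π)..π, zz u ^ l * K u)
      = ∑ i ∈ range (l+1), ((l.choose i : ℂ) * (-1)^(l-i)) * (G i - 1) := by
    rw [hsplit]
    rw [show ∑ i ∈ range (l+1), ((l.choose i : ℂ) * (-1)^(l-i)) * (G i - 1)
      = ∑ i ∈ range (l+1), ((l.choose i : ℂ) * (-1)^(l-i)) * G i
        - ∑ i ∈ range (l+1), ((l.choose i : ℂ) * (-1)^(l-i)) from by
      rw [← Finset.sum_sub_distrib]; exact Finset.sum_congr rfl fun i _ => by ring]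
    rw [hvanish, sub_zero]
  rw [hre]
  calc ‖∑ i ∈ range (l+1), ((l.choose i : ℂ) * (-1)^(l-i)) * (G i - 1)‖
      ≤ ∑ i ∈ range (l+1), ‖((l.choose i : ℂ) * (-1)^(l-i)) * (G i - 1)‖ := norm_sum_le _ _
  _ ≤ ∑ i ∈ range (l+1), (l.choose i : ℝ) * B := by
      refine sum_le_sum fun i hi => ?_
      rw [norm_mul, norm_mul, norm_pow]
      simp only [norm_neg, norm_one, one_pow, mul_one, Complex.norm_natCast]
      apply mul_le_mul_of_nonneg_left _ (Nat.cast_nonneg _)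
      rcases Nat.eq_zero_or_pos i with rfl | hipos
      · rw [hG0, sub_self, norm_zero]; exact hB
      · exact hGflat i hipos (le_trans (Nat.lt_succ_iff.mp (Finset.mem_range.mp hi)) hlm)
  _ = (2^l : ℝ) * B := by
      rw [← Finset.sum_mul]
      congr 1
      rw [show ∑ i ∈ range (l+1), ((l.choose i : ℕ) : ℝ) = ((∑ i ∈ range (l+1), l.choose i : ℕ) : ℝ)
        from by push_cast; rfl]
      rw [Nat.sum_range_choose]
      push_cast
      ring

lemma tail_integral (q : ℝ) (hq : q < -1) (ε : ℝ) (hε : 0 < ε) :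
    (∫ u in (-π)..π, (ε + |u|) ^ q) ≤ 2 * ε ^ (q+1) / (-(q+1)) := by
  have hπ := pi_pos
  have hcont : Continuous (fun u : ℝ => (ε + |u|) ^ q) := by
    apply Continuous.rpow_const (continuous_const.add continuous_abs)
    intro x
    exact Or.inl (by positivity : (0:ℝ) < ε + |x|).ne'
  have hval : (∫ u in (0:ℝ)..π, (ε + u) ^ q) = ((ε+π)^(q+1) - ε^(q+1))/(q+1) := by
    have h1 : (∫ u in (0:ℝ)..π, (ε + u) ^ q) = ∫ x in ε..(ε+π), x ^ q := by
      have := intervalIntegral.integral_comp_add_left (a := (0:ℝ)) (b := π)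
        (fun x : ℝ => x ^ q) ε
      simpa using this
    rw [h1]
    apply integral_rpow
    right
    constructor
    · linarith
    · intro hmem
      rw [Set.uIcc_of_le (by linarith)] at hmem
      have := hmem.1
      linarith
  have hpos : (∫ u in (0:ℝ)..π, (ε + u) ^ q) ≤ ε^(q+1) / (-(q+1)) := by
    rw [hval]
    have heq : ((ε+π)^(q+1) - ε^(q+1))/(q+1) = (ε^(q+1) - (ε+π)^(q+1))/(-(q+1)) := by
      rw [div_eq_div_iff (by linarith) (by linarith)]
      ring
    rw [heq]
    have h2 : (0:ℝ) ≤ (ε+π)^(q+1) := Real.rpow_nonneg (by linarith) _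
    gcongr
    · linarith
    · linarith
  have hhalf1 : (∫ u in (0:ℝ)..π, (ε + |u|) ^ q) = ∫ u in (0:ℝ)..π, (ε + u) ^ q := by
    apply intervalIntegral.integral_congr
    intro u hu
    rw [Set.uIcc_of_le (by linarith)] at hu
    simp only [abs_of_nonneg hu.1]
  have hhalf2 : (∫ u in (-π)..(0:ℝ), (ε + |u|) ^ q) = ∫ u in (0:ℝ)..π, (ε + u) ^ q := by
    have hcn := intervalIntegral.integral_comp_neg (a := (0:ℝ)) (b := π)
      (fun u : ℝ => (ε + |u|) ^ q)
    have h4 : (∫ u in (0:ℝ)..π, (ε + |(-u)|) ^ q) = ∫ u in (-π)..(0:ℝ), (ε + |u|) ^ q := by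
      simpa using hcn
    rw [← h4, ← hhalf1]
    apply intervalIntegral.integral_congr
    intro u _
    simp only [abs_neg]
  have hsplit : (∫ u in (-π)..π, (ε + |u|) ^ q)
      = (∫ u in (-π)..(0:ℝ), (ε + |u|) ^ q) + ∫ u in (0:ℝ)..π, (ε + |u|) ^ q :=
    (intervalIntegral.integral_add_adjacent_intervals
      (hcont.intervalIntegrable _ _) (hcont.intervalIntegrable _ _)).symm
  rw [hsplit, hhalf1, hhalf2]
  calc (∫ u in (0:ℝ)..π, (ε + u) ^ q) + (∫ u in (0:ℝ)..π, (ε + u) ^ q)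
      ≤ ε^(q+1) / (-(q+1)) + ε^(q+1) / (-(q+1)) := add_le_add hpos hpos
  _ = 2 * ε ^ (q+1) / (-(q+1)) := by ring

lemma log_eps (δ : ℝ) (hδ : 0 < δ) (ε : ℝ) (hε : 0 < ε) (hε1 : ε ≤ 1) :
    Real.log (1 + ε⁻¹) ≤ (Real.log 2 + 1/δ) * ε ^ (-δ) := by
  have hεinv : (1:ℝ) ≤ ε⁻¹ := one_le_inv_iff₀.mpr ⟨hε, hε1⟩
  have h1 : Real.log (1 + ε⁻¹) ≤ Real.log (2 * ε⁻¹) := by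
    apply Real.log_le_log (by linarith)
    linarith
  have h2 : Real.log (2 * ε⁻¹) = Real.log 2 + Real.log ε⁻¹ :=
    Real.log_mul (by norm_num) (by positivity)
  have h3 : Real.log ε⁻¹ = (1/δ) * Real.log (ε ^ (-δ)) := by
    rw [Real.log_rpow hε]
    rw [Real.log_inv]
    field_simp
  have h4 : Real.log (ε ^ (-δ)) ≤ ε ^ (-δ) := by
    have := Real.log_le_sub_one_of_pos (show (0:ℝ) < ε ^ (-δ) from Real.rpow_pos_of_pos hε _)
    linarith
  have h5 : (1:ℝ) ≤ ε ^ (-δ) :=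
    Real.one_le_rpow_of_pos_of_le_one_of_nonpos hε hε1 (by linarith)
  have h6 : 0 ≤ Real.log 2 := Real.log_nonneg (by norm_num)
  have h7 : 0 ≤ Real.log (ε ^ (-δ)) := Real.log_nonneg h5
  calc Real.log (1 + ε⁻¹) ≤ Real.log 2 + (1/δ) * Real.log (ε ^ (-δ)) := by
        rw [← h3, ← h2]; exact h1
  _ ≤ Real.log 2 * ε ^ (-δ) + (1/δ) * ε ^ (-δ) := by
      apply add_le_add
      · nlinarith
      · apply mul_le_mul_of_nonneg_left h4 (by positivity)
  _ = (Real.log 2 + 1/δ) * ε ^ (-δ) := by ring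

lemma pointwise_est (m n : ℕ) (αe : ℝ) (hα0 : 0 ≤ αe) (hα1 : αe ≤ 1)
    (hnα : (n:ℝ) + αe < m)
    (C_K : ℝ) (hCK : 0 < C_K) (ε : ℝ) (hε0 : 0 < ε) (hε1 : ε ≤ 1)
    (K : ℝ → ℂ) (hKc : Continuous K) (hKper : ∀ θ : ℝ, K (θ + 2*π) = K θ)
    (hKnorm : (∫ θ in (-π)..π, K θ) = 1)
    (hKflat : ∀ j : ℕ, 1 ≤ j → j ≤ m - 1 →
      ‖(∫ θ in (-π)..π, K (-θ) * Complex.exp (Complex.I * (j:ℂ) * (θ:ℂ))) - 1‖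
        ≤ C_K * ε^m * Real.log (1+ε⁻¹))
    (hKconc : ∀ θ ∈ Set.Icc (-π) π, ‖K θ‖ ≤ C_K * ε^m / (ε+|θ|)^(m+1))
    (φ : ℝ → ℂ) (Cφ : ℝ) (hφ : ContDiff ℝ n φ) (hφper : ∀ θ : ℝ, φ (θ + 2*π) = φ θ)
    (hφbd : ∀ j : ℕ, j ≤ n → ∀ θ : ℝ, ‖iteratedDeriv j φ θ‖ ≤ Cφ)
    (hφH : ∀ x y : ℝ, ‖iteratedDeriv n φ x - iteratedDeriv n φ y‖ ≤ Cφ * |x-y|^αe)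
    (x : ℝ) (hx : x ∈ Set.Icc (-π) π) :
    ‖φ x - ∫ θ in (-π)..π, φ θ * K (θ - x)‖ ≤
      (CP n * C_K * (2/((m:ℝ) - ((n:ℝ)+αe)))
       + CP n * C_K * 2^(n+1) * (Real.log 2 + 1/((m:ℝ) - ((n:ℝ)+αe)))) * Cφ
        * ε ^ ((n:ℝ)+αe) := by
  have hπ := pi_pos
  have hπ1 : (1:ℝ) ≤ π := by linarith [pi_gt_three]
  set δ : ℝ := (m:ℝ) - ((n:ℝ)+αe) with hδdef
  have hδ : 0 < δ := by rw [hδdef]; linarith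
  have hCφ0 : 0 ≤ Cφ := le_trans (norm_nonneg _) (hφbd 0 (Nat.zero_le n) 0)
  have hnm : n ≤ m - 1 := by
    have h1 : (n:ℝ) < (m:ℝ) := by linarith
    have h2 : n < m := by exact_mod_cast h1
    omega
  have hφc : Continuous φ := hφ.continuous
  have hlog0 : 0 ≤ Real.log (1+ε⁻¹) := Real.log_nonneg (by
    have : (1:ℝ) ≤ ε⁻¹ := one_le_inv_iff₀.mpr ⟨hε0, hε1⟩
    linarith)
  have hεm0 : (0:ℝ) ≤ ε^m := by positivity
  obtain ⟨b, hb0, hble, hbapp⟩ :=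
    pointwise_approx n αe hα0 hα1 φ Cφ hφ hφbd hφH x
  set Q : ℝ → ℂ := fun u => ∑ l ∈ range (n+1), b l * zz u ^ l with hQdef
  have hQc : Continuous Q := by
    apply continuous_finset_sum
    intro l _
    exact continuous_const.mul (continuous_zz.pow l)
  -- Step 1: change of variables
  have hper2 : Function.Periodic (fun u => φ (x+u) * K u) (2*π) := by
    intro u
    show φ (x + (u + 2*π)) * K (u + 2*π) = φ (x+u) * K u
    rw [show x + (u + 2*π) = (x+u) + 2*π by ring, hφper (x+u), hKper u]
  have step1 : (∫ θ in (-π)..π, φ θ * K (θ - x)) = ∫ u in (-π)..π, φ (x+u) * K u := by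
    have h1 := intervalIntegral.integral_comp_add_right (a := -π - x) (b := π - x)
      (f := fun θ => φ θ * K (θ - x)) x
    simp only [add_sub_cancel_right] at h1
    rw [show -π - x + x = -π by ring, show π - x + x = π by ring] at h1
    have h2 : (∫ u in (-π - x)..(π - x), φ (u + x) * K u)
        = ∫ u in (-π - x)..(π - x), φ (x + u) * K u := by
      apply intervalIntegral.integral_congr
      intro u _
      simp only [add_comm u x]
    have h3 : (∫ u in (-π - x)..(π - x), φ (x + u) * K u)
        = ∫ u in (-π)..π, φ (x + u) * K u := by
      calc (∫ u in (-π - x)..(π - x), φ (x + u) * K u)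
          = ∫ u in (-π - x)..((-π - x) + 2*π), φ (x + u) * K u := by
            rw [show (-π - x) + 2*π = π - x by ring]
      _ = ∫ u in (-π)..((-π) + 2*π), φ (x + u) * K u :=
            hper2.intervalIntegral_add_eq (-π - x) (-π)
      _ = ∫ u in (-π)..π, φ (x + u) * K u := by
            rw [show (-π:ℝ) + 2*π = π by ring]
    rw [← h1, h2, h3]
  -- Step 2: subtract
  have hKi : IntervalIntegrable K volume (-π) π := hKc.intervalIntegrable _ _
  have hφKi : IntervalIntegrable (fun u => φ (x+u) * K u) volume (-π) π := by
    apply Continuous.intervalIntegrable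
    exact (hφc.comp (continuous_const.add continuous_id)).mul hKc
  have hQKi : IntervalIntegrable (fun u => (Q u - φ (x+u)) * K u) volume (-π) π := by
    apply Continuous.intervalIntegrable
    exact ((hQc.sub (hφc.comp (continuous_const.add continuous_id))).mul hKc)
  have hD : φ x - (∫ θ in (-π)..π, φ θ * K (θ - x))
      = (∫ u in (-π)..π, (Q u - φ (x+u)) * K u) + ∫ u in (-π)..π, (φ x - Q u) * K u := by
    rw [step1]
    have h4 : (∫ u in (-π)..π, (Q u - φ (x+u)) * K u) + (∫ u in (-π)..π, (φ x - Q u) * K u)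
        = ∫ u in (-π)..π, ((Q u - φ (x+u)) * K u + (φ x - Q u) * K u) := by
      rw [intervalIntegral.integral_add hQKi]
      apply Continuous.intervalIntegrable
      exact (continuous_const.sub hQc).mul hKc
    rw [h4]
    have h5 : (∫ u in (-π)..π, ((Q u - φ (x+u)) * K u + (φ x - Q u) * K u))
        = ∫ u in (-π)..π, (φ x * K u - φ (x+u) * K u) := by
      apply intervalIntegral.integral_congr
      intro u _
      ring
    rw [h5, intervalIntegral.integral_sub (by
      apply Continuous.intervalIntegrable
      exact continuous_const.mul hKc) hφKi]
    rw [intervalIntegral.integral_const_mul, hKnorm, mul_one]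
  -- second term
  have hzzKc : ∀ l : ℕ, Continuous (fun u => zz u ^ l * K u) := fun l =>
    (continuous_zz.pow l).mul hKc
  have hsecond : (∫ u in (-π)..π, (φ x - Q u) * K u)
      = -∑ l ∈ range n, b (l+1) * ∫ u in (-π)..π, zz u ^ (l+1) * K u := by
    have h6 : ∀ u : ℝ, (φ x - Q u) * K u
        = -∑ l ∈ range n, b (l+1) * (zz u ^ (l+1) * K u) := by
      intro u
      have h7 : Q u = b 0 * 1 + ∑ l ∈ range n, b (l+1) * zz u ^ (l+1) := by
        rw [hQdef]
        simp only
        rw [Finset.sum_range_succ']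
        rw [pow_zero, add_comm]
      rw [h7, hb0, mul_one]
      calc (φ x - (φ x + ∑ l ∈ range n, b (l+1) * zz u ^ (l+1))) * K u
          = -((∑ l ∈ range n, b (l+1) * zz u ^ (l+1)) * K u) := by ring
      _ = -∑ l ∈ range n, b (l+1) * (zz u ^ (l+1) * K u) := by
          rw [Finset.sum_mul]
          congr 1
          exact Finset.sum_congr rfl fun l _ => by ring
    rw [intervalIntegral.integral_congr (g := fun u =>
      -∑ l ∈ range n, b (l+1) * (zz u ^ (l+1) * K u)) (fun u _ => h6 u)]
    rw [intervalIntegral.integral_neg]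
    congr 1
    have hII : ∀ l ∈ range n, IntervalIntegrable (fun u => b (l+1) * (zz u ^ (l+1) * K u))
        volume (-π) π := fun l _ => (continuous_const.mul (hzzKc (l+1))).intervalIntegrable _ _
    rw [intervalIntegral.integral_finset_sum hII]
    exact Finset.sum_congr rfl fun l _ => intervalIntegral.integral_const_mul _ _
  -- bound on the second term
  have hsec_bound : ‖∑ l ∈ range n, b (l+1) * ∫ u in (-π)..π, zz u ^ (l+1) * K u‖
      ≤ CP n * Cφ * C_K * 2^(n+1) * (ε^m * Real.log (1+ε⁻¹)) := by
    have hBpos : 0 ≤ C_K * ε^m * Real.log (1+ε⁻¹) := by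
      apply mul_nonneg (mul_nonneg (le_of_lt hCK) hεm0) hlog0
    calc ‖∑ l ∈ range n, b (l+1) * ∫ u in (-π)..π, zz u ^ (l+1) * K u‖
        ≤ ∑ l ∈ range n, ‖b (l+1) * ∫ u in (-π)..π, zz u ^ (l+1) * K u‖ := norm_sum_le _ _
    _ ≤ ∑ l ∈ range n, (CP n * Cφ) * (2^(l+1) * (C_K * ε^m * Real.log (1+ε⁻¹))) := by
        refine sum_le_sum fun l hl => ?_
        rw [norm_mul]
        have hln : l + 1 ≤ m - 1 := by
          have := Finset.mem_range.mp hl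
          omega
        exact mul_le_mul (hble (l+1))
          (moment m (C_K * ε^m * Real.log (1+ε⁻¹)) K hKc hKnorm hKflat (l+1)
            (Nat.le_add_left 1 l) hln)
          (norm_nonneg _) (mul_nonneg (le_of_lt (CP_pos n)) hCφ0)
    _ = (CP n * Cφ) * (C_K * ε^m * Real.log (1+ε⁻¹)) * (∑ l ∈ range n, (2:ℝ)^(l+1)) := by
        rw [Finset.mul_sum]
        refine Finset.sum_congr rfl fun l _ => by ring
    _ ≤ (CP n * Cφ) * (C_K * ε^m * Real.log (1+ε⁻¹)) * 2^(n+1) := by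
        apply mul_le_mul_of_nonneg_left _ (mul_nonneg
          (mul_nonneg (le_of_lt (CP_pos n)) hCφ0) hBpos)
        have hg : ∑ l ∈ range n, (2:ℝ)^(l+1) = 2 * (2^n - 1) := by
          have h8 : ∑ l ∈ range n, (2:ℝ)^(l+1) = 2 * ∑ l ∈ range n, (2:ℝ)^l := by
            rw [Finset.mul_sum]
            exact Finset.sum_congr rfl fun l _ => by ring
          rw [h8, geom_sum_eq (by norm_num : (2:ℝ) ≠ 1)]
          norm_num
        rw [hg]
        have h9 : (0:ℝ) < 2^n := by positivity
        calc (2:ℝ) * (2^n - 1) ≤ 2 * 2^n := by linarith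
        _ = 2^(n+1) := by ring
    _ = CP n * Cφ * C_K * 2^(n+1) * (ε^m * Real.log (1+ε⁻¹)) := by ring
  -- bound on the first term
  set q : ℝ := (n:ℝ) + αe - ((m:ℝ)+1) with hqdef
  have hq : q < -1 := by rw [hqdef]; linarith
  have hfirst_bound : ‖∫ u in (-π)..π, (Q u - φ (x+u)) * K u‖
      ≤ CP n * Cφ * C_K * ε^m * (2 * ε^(q+1) / (-(q+1))) := by
    have hnn : (0:ℝ) ≤ (n:ℝ) + αe := add_nonneg (Nat.cast_nonneg n) hα0
    have hcnn : 0 ≤ CP n * Cφ * C_K * ε^m :=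
      mul_nonneg (mul_nonneg (mul_nonneg (le_of_lt (CP_pos n)) hCφ0) (le_of_lt hCK)) hεm0
    calc ‖∫ u in (-π)..π, (Q u - φ (x+u)) * K u‖
        ≤ ∫ u in (-π)..π, ‖(Q u - φ (x+u)) * K u‖ :=
          intervalIntegral.norm_integral_le_integral_norm (by linarith)
    _ ≤ ∫ u in (-π)..π, CP n * Cφ * C_K * ε^m * (ε+|u|)^q := by
        apply intervalIntegral.integral_mono_on (by linarith)
        · apply Continuous.intervalIntegrable
          exact ((hQc.sub (hφc.comp (continuous_const.add continuous_id))).mul hKc).norm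
        · apply Continuous.intervalIntegrable
          apply Continuous.mul continuous_const
          apply Continuous.rpow_const (continuous_const.add continuous_abs)
          intro y
          exact Or.inl (by positivity : (0:ℝ) < ε + |y|).ne'
        · intro u hu
          have huπ : |u| ≤ π := abs_le.mpr ⟨hu.1, hu.2⟩
          have hbase : (0:ℝ) < ε + |u| := by positivity
          have happ : ‖Q u - φ (x+u)‖ ≤ CP n * Cφ * |u| ^ ((n:ℝ)+αe) := by
            rw [norm_sub_rev]
            exact hbapp u huπ
          have hKu := hKconc u ⟨hu.1, hu.2⟩
          have hub : |u| ^ ((n:ℝ)+αe) ≤ (ε+|u|) ^ ((n:ℝ)+αe) :=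
            Real.rpow_le_rpow (abs_nonneg u) (by linarith [abs_nonneg u]) hnn
          have hdivq : (ε+|u|) ^ ((n:ℝ)+αe) / (ε+|u|)^(m+1) = (ε+|u|) ^ q := by
            rw [show ((ε+|u|):ℝ)^(m+1) = (ε+|u|) ^ (((m+1:ℕ)):ℝ) from
              (Real.rpow_natCast _ _).symm]
            rw [← Real.rpow_sub hbase]
            congr 1
            rw [hqdef]
            push_cast
            ring
          calc ‖(Q u - φ (x+u)) * K u‖ = ‖Q u - φ (x+u)‖ * ‖K u‖ := norm_mul _ _
          _ ≤ (CP n * Cφ * |u| ^ ((n:ℝ)+αe)) * (C_K * ε^m / (ε+|u|)^(m+1)) := by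
              apply mul_le_mul happ hKu (norm_nonneg _)
              apply mul_nonneg (mul_nonneg (le_of_lt (CP_pos n)) hCφ0)
              exact Real.rpow_nonneg (abs_nonneg u) _
          _ ≤ (CP n * Cφ * (ε+|u|) ^ ((n:ℝ)+αe)) * (C_K * ε^m / (ε+|u|)^(m+1)) := by
              apply mul_le_mul_of_nonneg_right
              · exact mul_le_mul_of_nonneg_left hub
                  (mul_nonneg (le_of_lt (CP_pos n)) hCφ0)
              · positivity
          _ = CP n * Cφ * C_K * ε^m * ((ε+|u|) ^ ((n:ℝ)+αe) / (ε+|u|)^(m+1)) := by ring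
          _ = CP n * Cφ * C_K * ε^m * (ε+|u|)^q := by rw [hdivq]
    _ = CP n * Cφ * C_K * ε^m * ∫ u in (-π)..π, (ε+|u|)^q :=
          intervalIntegral.integral_const_mul _ _
    _ ≤ CP n * Cφ * C_K * ε^m * (2 * ε^(q+1) / (-(q+1))) :=
          mul_le_mul_of_nonneg_left (tail_integral q hq ε hε0) hcnn
  -- put it together
  have hεq : ε^m * ε^(q+1) = ε ^ ((n:ℝ)+αe) := by
    rw [show (ε:ℝ)^m = ε ^ ((m:ℕ):ℝ) from (Real.rpow_natCast _ _).symm,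
      ← Real.rpow_add hε0]
    congr 1
    rw [hqdef]
    ring
  have hq1 : -(q+1) = δ := by rw [hqdef, hδdef]; ring
  have hεope : (0:ℝ) ≤ ε ^ ((n:ℝ)+αe) := le_of_lt (Real.rpow_pos_of_pos hε0 _)
  have hfb2 : ‖∫ u in (-π)..π, (Q u - φ (x+u)) * K u‖
      ≤ CP n * C_K * (2/δ) * Cφ * ε ^ ((n:ℝ)+αe) := by
    refine le_trans hfirst_bound (le_of_eq ?_)
    rw [show CP n * Cφ * C_K * ε^m * (2 * ε^(q+1) / (-(q+1)))
      = CP n * Cφ * C_K * (ε^m * ε^(q+1)) * (2 / (-(q+1))) by ring]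
    rw [hεq, hq1]
    ring
  have hεdm : ε^m * ε^(-δ) = ε ^ ((n:ℝ)+αe) := by
    rw [show (ε:ℝ)^m = ε ^ ((m:ℕ):ℝ) from (Real.rpow_natCast _ _).symm,
      ← Real.rpow_add hε0]
    congr 1
    rw [hδdef]
    ring
  have hsb2 : ‖∑ l ∈ range n, b (l+1) * ∫ u in (-π)..π, zz u ^ (l+1) * K u‖
      ≤ CP n * C_K * 2^(n+1) * (Real.log 2 + 1/δ) * Cφ * ε ^ ((n:ℝ)+αe) := by
    refine le_trans hsec_bound ?_
    have hle := log_eps δ hδ ε hε0 hε1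
    have h10 : ε^m * Real.log (1+ε⁻¹) ≤ (Real.log 2 + 1/δ) * ε ^ ((n:ℝ)+αe) := by
      calc ε^m * Real.log (1+ε⁻¹) ≤ ε^m * ((Real.log 2 + 1/δ) * ε ^ (-δ)) :=
            mul_le_mul_of_nonneg_left hle hεm0
      _ = (Real.log 2 + 1/δ) * (ε^m * ε^(-δ)) := by ring
      _ = (Real.log 2 + 1/δ) * ε ^ ((n:ℝ)+αe) := by rw [hεdm]
    have hcnn2 : (0:ℝ) ≤ CP n * Cφ * C_K * 2^(n+1) := by
      apply mul_nonneg (mul_nonneg (mul_nonneg (le_of_lt (CP_pos n)) hCφ0) (le_of_lt hCK))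
      positivity
    calc CP n * Cφ * C_K * 2^(n+1) * (ε^m * Real.log (1+ε⁻¹))
        ≤ CP n * Cφ * C_K * 2^(n+1) * ((Real.log 2 + 1/δ) * ε ^ ((n:ℝ)+αe)) :=
          mul_le_mul_of_nonneg_left h10 hcnn2
    _ = CP n * C_K * 2^(n+1) * (Real.log 2 + 1/δ) * Cφ * ε ^ ((n:ℝ)+αe) := by ring
  rw [hD, hsecond]
  calc ‖(∫ u in (-π)..π, (Q u - φ (x+u)) * K u)
        + -∑ l ∈ range n, b (l+1) * ∫ u in (-π)..π, zz u ^ (l+1) * K u‖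
      ≤ ‖∫ u in (-π)..π, (Q u - φ (x+u)) * K u‖
        + ‖∑ l ∈ range n, b (l+1) * ∫ u in (-π)..π, zz u ^ (l+1) * K u‖ := by
        refine le_trans (norm_add_le _ _) ?_
        rw [norm_neg]
  _ ≤ CP n * C_K * (2/δ) * Cφ * ε ^ ((n:ℝ)+αe)
      + CP n * C_K * 2^(n+1) * (Real.log 2 + 1/δ) * Cφ * ε ^ ((n:ℝ)+αe) :=
        add_le_add hfb2 hsb2
  _ = (CP n * C_K * (2/δ) + CP n * C_K * 2^(n+1) * (Real.log 2 + 1/δ)) * Cφ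
        * ε ^ ((n:ℝ)+αe) := by ring

end WCR
end

/-- Convergence to the functional calculus / weak convergence of smoothed spectral
measures: for an `m`-th order periodic kernel `{K_ε^𝕋}` with constant `C_K`, there is a
constant `C` (depending only on `C_K`, `m`, `n`, `α`) such that for every scalar
spectral measure `ξ_g` (a probability measure supported on `[-π,π]`) and every
`2π`-periodic `φ ∈ C^{n,α}` with `n + α < m` (with `C^{n,α}`-norm bounded by `Cφ`),
`|∫ φ dξ_g - ∫ φ(θ)[K_ε^𝕋 ∗ ξ_g](θ) dθ| ≤ C·Cφ·ε^{n+α}` for all `0 < ε ≤ 1`. -/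
theorem weak_convergence_rate (m n : ℕ) (α : ℝ) (hα0 : 0 ≤ α) (hα1 : α ≤ 1)
    (hnα : (n : ℝ) + α < m) (C_K : ℝ) (hCK : 0 < C_K) :
    ∃ C : ℝ, 0 < C ∧
      ∀ Kk : ℝ → ℝ → ℂ,
        (∀ ε ∈ Set.Ioc (0 : ℝ) 1, Continuous (Kk ε)) →
        (∀ ε ∈ Set.Ioc (0 : ℝ) 1, ∀ θ : ℝ, Kk ε (θ + 2 * π) = Kk ε θ) →
        (∀ ε ∈ Set.Ioc (0 : ℝ) 1, (∫ θ in (-π)..π, Kk ε θ) = 1) →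
        (∀ ε ∈ Set.Ioc (0 : ℝ) 1, ∀ j : ℕ, 1 ≤ j → j ≤ m - 1 →
          ‖(∫ θ in (-π)..π, Kk ε (-θ) * Complex.exp (Complex.I * (j : ℂ) * (θ : ℂ))) - 1‖
            ≤ C_K * ε ^ m * Real.log (1 + ε⁻¹)) →
        (∀ ε ∈ Set.Ioc (0 : ℝ) 1, ∀ θ ∈ Set.Icc (-π) π,
          ‖Kk ε θ‖ ≤ C_K * ε ^ m / (ε + |θ|) ^ (m + 1)) →
        ∀ ξ : Measure ℝ, IsProbabilityMeasure ξ → ξ (Set.Icc (-π) π)ᶜ = 0 →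
        ∀ (φ : ℝ → ℂ) (Cφ : ℝ),
          ContDiff ℝ n φ →
          (∀ θ : ℝ, φ (θ + 2 * π) = φ θ) →
          (∀ j : ℕ, j ≤ n → ∀ θ : ℝ, ‖iteratedDeriv j φ θ‖ ≤ Cφ) →
          (∀ x y : ℝ, ‖iteratedDeriv n φ x - iteratedDeriv n φ y‖ ≤ Cφ * |x - y| ^ α) →
          ∀ ε ∈ Set.Ioc (0 : ℝ) 1,
            ‖(∫ θ, φ θ ∂ξ) -
                ∫ θ in (-π)..π, φ θ * ∫ φ', Kk ε (θ - φ') ∂ξ‖ ≤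
              C * Cφ * ε ^ ((n : ℝ) + α) := by
  have hπ := pi_pos
  set δ : ℝ := (m:ℝ) - ((n:ℝ)+α) with hδdef
  have hδ : 0 < δ := by rw [hδdef]; linarith
  have hlog2 : (0:ℝ) ≤ Real.log 2 := Real.log_nonneg (by norm_num)
  set C : ℝ := WCR.CP n * C_K * (2/δ) + WCR.CP n * C_K * 2^(n+1) * (Real.log 2 + 1/δ) with hCdef
  have hC : 0 < C := by
    have h1 : 0 < WCR.CP n * C_K * (2/δ) := by
      apply mul_pos (mul_pos (WCR.CP_pos n) hCK)
      positivity
    have h2 : 0 ≤ WCR.CP n * C_K * 2^(n+1) * (Real.log 2 + 1/δ) := by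
      apply mul_nonneg (mul_nonneg (mul_nonneg (WCR.CP_pos n).le hCK.le) (by positivity))
      positivity
    rw [hCdef]; linarith
  refine ⟨C, hC, ?_⟩
  intro Kk hKc hKper hKnorm hKflat hKconc ξ hξP hξsupp φ Cφ hφ hφper hφbd hφH ε hε
  obtain ⟨hε0, hε1⟩ := hε
  have hεmem : ε ∈ Set.Ioc (0:ℝ) 1 := ⟨hε0, hε1⟩
  set K : ℝ → ℂ := Kk ε with hKdef
  have hKcont : Continuous K := hKc ε hεmem
  have hφc : Continuous φ := hφ.continuous
  have hCφ0 : 0 ≤ Cφ := le_trans (norm_nonneg _) (hφbd 0 (Nat.zero_le n) 0)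
  -- global bound for K
  obtain ⟨MK, hMK⟩ : ∃ M : ℝ, ∀ θ : ℝ, ‖K θ‖ ≤ M := by
    have hper : Function.Periodic K (2*π) := hKper ε hεmem
    have hb := hper.isBounded_of_continuous (by positivity) hKcont
    obtain ⟨M, hM⟩ := isBounded_iff_forall_norm_le.mp hb
    exact ⟨M, fun θ => hM _ (Set.mem_range_self θ)⟩
  have hMK0 : 0 ≤ MK := le_trans (norm_nonneg _) (hMK 0)
  -- measures
  set μ : Measure ℝ := volume.restrict (Set.Ioc (-π) π) with hμdef
  haveI hμfin : IsFiniteMeasure μ := by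
    constructor
    rw [hμdef, Measure.restrict_apply_univ, Real.volume_Ioc]
    exact ENNReal.ofReal_lt_top
  -- Fubini
  have hFcont : Continuous (fun p : ℝ × ℝ => φ p.1 * K (p.1 - p.2)) := by fun_prop
  have hFint : Integrable (fun p : ℝ × ℝ => φ p.1 * K (p.1 - p.2)) (μ.prod ξ) := by
    apply Integrable.mono' (integrable_const (Cφ * MK)) hFcont.aestronglyMeasurable
    filter_upwards with p
    rw [norm_mul]
    exact mul_le_mul (hφbd 0 (Nat.zero_le n) p.1) (hMK _) (norm_nonneg _) hCφ0
  have hswap : (∫ θ, (∫ x, φ θ * K (θ - x) ∂ξ) ∂μ)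
      = ∫ x, (∫ θ, φ θ * K (θ - x) ∂μ) ∂ξ :=
    integral_integral_swap hFint
  have hT1 : (∫ θ in (-π)..π, φ θ * ∫ x, K (θ - x) ∂ξ)
      = ∫ θ, (∫ x, φ θ * K (θ - x) ∂ξ) ∂μ := by
    rw [intervalIntegral.integral_of_le (by linarith)]
    apply setIntegral_congr_fun measurableSet_Ioc
    intro θ _
    exact (MeasureTheory.integral_const_mul (φ θ) _).symm
  have hGint : Integrable (fun x => ∫ θ, φ θ * K (θ - x) ∂μ) ξ :=
    hFint.integral_prod_right
  have hφint : Integrable φ ξ := by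
    apply Integrable.mono' (integrable_const Cφ) hφc.aestronglyMeasurable
    filter_upwards with θ
    exact hφbd 0 (Nat.zero_le n) θ
  have hdiff : (∫ θ, φ θ ∂ξ) - (∫ θ in (-π)..π, φ θ * ∫ x, K (θ - x) ∂ξ)
      = ∫ x, (φ x - ∫ θ, φ θ * K (θ - x) ∂μ) ∂ξ := by
    rw [hT1, hswap, ← integral_sub hφint hGint]
  rw [hdiff]
  -- a.e. bound
  have hae : ∀ᵐ x ∂ξ, x ∈ Set.Icc (-π) π := by
    rw [MeasureTheory.ae_iff]
    have he : {a : ℝ | ¬ a ∈ Set.Icc (-π) π} = (Set.Icc (-π) π)ᶜ := rfl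
    rw [he]
    exact hξsupp
  have hbound : ∀ᵐ x ∂ξ, ‖φ x - ∫ θ, φ θ * K (θ - x) ∂μ‖ ≤ C * Cφ * ε ^ ((n:ℝ)+α) := by
    filter_upwards [hae] with x hx
    have hint : (∫ θ, φ θ * K (θ - x) ∂μ) = ∫ θ in (-π)..π, φ θ * K (θ - x) := by
      rw [intervalIntegral.integral_of_le (by linarith)]
    rw [hint]
    have := WCR.pointwise_est m n α hα0 hα1 hnα C_K hCK ε hε0 hε1 K hKcont
      (hKper ε hεmem) (hKnorm ε hεmem) (hKflat ε hεmem) (hKconc ε hεmem)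
      φ Cφ hφ hφper hφbd hφH x hx
    refine le_trans this (le_of_eq ?_)
    rw [hCdef, hδdef]
  calc ‖∫ x, (φ x - ∫ θ, φ θ * K (θ - x) ∂μ) ∂ξ‖
      ≤ (C * Cφ * ε ^ ((n:ℝ)+α)) * (ξ Set.univ).toReal :=
        norm_integral_le_of_norm_le_const hbound
  _ = C * Cφ * ε ^ ((n:ℝ)+α) := by
      rw [measure_univ, ENNReal.toReal_one, mul_one]
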